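/- For all integers s > r ≥ 0, W_{2^r} + W_{2^s} = k[x]₀. -/

import Mathlib

open Polynomial

set_option linter.unusedSectionVars false

variable (k : Type*) [Field k] [Fintype k]

/-- `k[x]₀`: the free non-unital associative `k`-algebra on one generator `x`,
identified with the polynomials over `k` with zero constant term,
viewed as a `k`-submodule of `Polynomial k`. -/
noncomputable def A0 : Submodule k (Polynomial k) :=
  LinearMap.ker (Polynomial.aeval (0 : k)).toLinearMap

/-- A `T`-space of `k[x]₀`: a `k`-linear subspace of `k[x]₀` closed under
substitutions `f ↦ f ∘ g` for `g ∈ k[x]₀`. -/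
def IsTSpace (V : Submodule k (Polynomial k)) : Prop :=
  V ≤ A0 k ∧ ∀ f ∈ V, ∀ g ∈ A0 k, f.comp g ∈ V

/-- `H^S`: the smallest `T`-space of `k[x]₀` containing `H`. -/
noncomputable def TSp (H : Set (Polynomial k)) : Submodule k (Polynomial k) :=
  sInf {V | IsTSpace k V ∧ H ⊆ V}

/-- A `T`-ideal of `k[x]₀`: a `T`-space that is also an ideal of `k[x]₀`. -/
def IsTIdeal (V : Submodule k (Polynomial k)) : Prop :=
  IsTSpace k V ∧ ∀ f ∈ V, ∀ g ∈ A0 k, g * f ∈ V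

/-- `H^T`: the smallest `T`-ideal of `k[x]₀` containing `H`. -/
noncomputable def TId (H : Set (Polynomial k)) : Submodule k (Polynomial k) :=
  sInf {V | IsTIdeal k V ∧ H ⊆ V}

/-- `W_n = {x + x^{q^n}}^S + {x^{q^n+1}}^S`, where `q` is the order of `k`. -/
noncomputable def Wn (n : ℕ) : Submodule k (Polynomial k) :=
  TSp k {X + X ^ (Fintype.card k ^ n)} ⊔ TSp k {X ^ (Fintype.card k ^ n + 1)}

/-- `U_n = {x - x^{q^{2n}}}^T`, where `q` is the order of `k`. -/
noncomputable def Un (n : ℕ) : Submodule k (Polynomial k) :=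
  TId k {X - X ^ (Fintype.card k ^ (2 * n))}

lemma mem_A0_iff (p : k[X]) : p ∈ A0 k ↔ aeval (0:k) p = 0 := by
  simp [A0, LinearMap.mem_ker]

lemma X_mem_A0 : (X : k[X]) ∈ A0 k := by simp [mem_A0_iff]

lemma Xpow_mem_A0 (d : ℕ) (hd : d ≠ 0) : (X^d : k[X]) ∈ A0 k := by
  simp [mem_A0_iff, hd]

lemma isTSpace_A0 : IsTSpace k (A0 k) := by
  refine ⟨le_rfl, fun f hf g hg => ?_⟩
  rw [mem_A0_iff] at *
  rw [aeval_comp, hg]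
  exact hf

lemma TSp_le {H : Set k[X]} {V : Submodule k k[X]} (hV : IsTSpace k V) (hH : H ⊆ V) :
    TSp k H ≤ V := sInf_le ⟨hV, hH⟩

lemma subset_TSp {H : Set k[X]} : H ⊆ TSp k H := fun h hh =>
  Submodule.mem_sInf.2 fun _ hV => hV.2 hh

lemma TSp_le_A0 {H : Set k[X]} (hH : H ⊆ A0 k) : TSp k H ≤ A0 k :=
  TSp_le k (isTSpace_A0 k) hH

lemma isTSpace_TSp {H : Set k[X]} (hH : H ⊆ A0 k) : IsTSpace k (TSp k H) := by
  refine ⟨TSp_le_A0 k hH, fun f hf g hg => ?_⟩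
  exact Submodule.mem_sInf.2 fun V hV => hV.1.2 f (Submodule.mem_sInf.1 hf V hV) g hg

lemma isTSpace_sup {V W : Submodule k k[X]} (hV : IsTSpace k V) (hW : IsTSpace k W) :
    IsTSpace k (V ⊔ W) := by
  refine ⟨sup_le hV.1 hW.1, fun f hf g hg => ?_⟩
  obtain ⟨a, ha, b, hb, rfl⟩ := Submodule.mem_sup.1 hf
  rw [add_comp]
  exact Submodule.add_mem _ (Submodule.mem_sup_left (hV.2 a ha g hg))
    (Submodule.mem_sup_right (hW.2 b hb g hg))

lemma comp_mem_TSp {h g : k[X]} (hh : h ∈ A0 k) (hg : g ∈ A0 k) :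
    h.comp g ∈ TSp k {h} :=
  (isTSpace_TSp k (Set.singleton_subset_iff.2 hh)).2 h
    (subset_TSp k (Set.mem_singleton h)) g hg

lemma gen1_mem_A0 (Q : ℕ) (hQ : Q ≠ 0) : (X + X^Q : k[X]) ∈ A0 k :=
  Submodule.add_mem _ (X_mem_A0 k) (Xpow_mem_A0 k Q hQ)

lemma isTSpace_Wn (n : ℕ) : IsTSpace k (Wn k n) := by
  have hq : Fintype.card k ^ n ≠ 0 := pow_ne_zero _ Fintype.card_ne_zero
  exact isTSpace_sup k
    (isTSpace_TSp k (Set.singleton_subset_iff.2 (gen1_mem_A0 k _ hq)))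
    (isTSpace_TSp k (Set.singleton_subset_iff.2 (Xpow_mem_A0 k _ (Nat.succ_ne_zero _))))

/-- `x^d + x^{dQ}` is in the T-space generated by `x + x^Q`. -/
lemma EA (Q d : ℕ) (hQ : Q ≠ 0) (hd : d ≠ 0) :
    (X^d + X^(d*Q) : k[X]) ∈ TSp k {X + X^Q} := by
  have h := comp_mem_TSp k (gen1_mem_A0 k Q hQ) (Xpow_mem_A0 k d hd)
  have he : (X + X^Q : k[X]).comp (X^d) = X^d + X^(d*Q) := by
    rw [add_comp, X_comp, pow_comp, X_comp, ← pow_mul]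
  rwa [he] at h

/-- `x - x^{Q^{2t}}` is in the T-space generated by `x + x^Q`. -/
lemma EB (Q : ℕ) (hQ : Q ≠ 0) (t : ℕ) :
    (X - X^(Q^(2*t)) : k[X]) ∈ TSp k {X + X^Q} := by
  induction t with
  | zero => simpa using Submodule.zero_mem _
  | succ t ih =>
      have h1 : (X^(Q^(2*t)) + X^(Q^(2*t)*Q) : k[X]) ∈ TSp k {X + X^Q} :=
        EA k Q _ hQ (pow_ne_zero _ hQ)
      have h2 : (X^(Q^(2*t)*Q) + X^(Q^(2*t)*Q*Q) : k[X]) ∈ TSp k {X + X^Q} :=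
        EA k Q _ hQ (by positivity)
      have key : (X - X^(Q^(2*(t+1))) : k[X])
          = (X - X^(Q^(2*t))) + (X^(Q^(2*t)) + X^(Q^(2*t)*Q))
            - (X^(Q^(2*t)*Q) + X^(Q^(2*t)*Q*Q)) := by
        have hexp : Q^(2*(t+1)) = Q^(2*t)*Q*Q := by ring
        rw [hexp]; ring
      rw [key]
      exact Submodule.sub_mem _ (Submodule.add_mem _ ih h1) h2

theorem Wn_pow_two_sup (r s : ℕ) (hrs : r < s) :
    Wn k (2 ^ r) ⊔ Wn k (2 ^ s) = A0 k := by
  have hq2 : 2 ≤ Fintype.card k := Fintype.one_lt_card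
  set q := Fintype.card k with hqdef
  set Q := q ^ 2 ^ r with hQdef
  set R := q ^ 2 ^ s with hRdef
  have hq0 : q ≠ 0 := by omega
  have hQ2 : 2 ≤ Q := le_trans hq2 (Nat.le_self_pow (by positivity) q)
  have hQ0 : Q ≠ 0 := by omega
  have hR0 : R ≠ 0 := pow_ne_zero _ hq0
  set M := 2 ^ (s - r - 1) with hMdef
  have hM1 : 1 ≤ M := Nat.one_le_two_pow
  have hRQ : R = Q ^ (2 * M) := by
    rw [hQdef, ← pow_mul, hRdef]
    congr 1
    have h1 : 2 * M = 2 ^ (s - r) := by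
      rw [hMdef, ← pow_succ']
      congr 1
      omega
    rw [h1, ← pow_add]
    congr 1
    omega
  set V := Wn k (2 ^ r) ⊔ Wn k (2 ^ s) with hVdef
  have hVT : IsTSpace k V := isTSpace_sup k (isTSpace_Wn k _) (isTSpace_Wn k _)
  -- membership of X + X^R in V
  have m1 : (X + X^R : k[X]) ∈ V := by
    apply Submodule.mem_sup_right
    apply Submodule.mem_sup_left
    exact subset_TSp k (Set.mem_singleton _)
  -- the main point: X ∈ V
  have hX : (X : k[X]) ∈ V := by
    rcases eq_or_ne (ringChar k) 2 with h2 | hodd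
    · -- characteristic 2
      haveI : CharP k 2 := h2 ▸ ringChar.charP k
      haveI : CharP k[X] 2 := inferInstance
      obtain ⟨e, -, hcard⟩ := FiniteField.card k 2
      set w := (e : ℕ) * 2 ^ r with hwdef
      have hw1 : 1 ≤ w := by
        have h1 : 0 < (e:ℕ) := e.2
        have h2' : 0 < 2^r := Nat.pow_pos (by norm_num)
        have h3 : 0 < w := by rw [hwdef]; exact Nat.mul_pos h1 h2'
        omega
      have hQw : Q = 2 ^ w := by rw [hQdef, hqdef, hcard, ← pow_mul]
      set c := 2 ^ (w - 1) with hcdef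
      have hc1 : 1 ≤ c := Nat.one_le_two_pow
      have hQc : Q = 2 * c := by
        rw [hQw, hcdef, ← pow_succ']
        congr 1
        omega
      set S := ∑ j ∈ Finset.range M, Q ^ (2 * j) with hSdef
      have geom : ∀ m : ℕ, (∑ j ∈ Finset.range m, Q ^ (2 * j)) * (Q * Q) + 1
          = (∑ j ∈ Finset.range m, Q ^ (2 * j)) + Q ^ (2 * m) := by
        intro m
        induction m with
        | zero => simp
        | succ m ih =>
            rw [Finset.sum_range_succ]
            have hexp : Q ^ (2 * (m + 1)) = Q ^ (2 * m) * Q * Q := by ring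
            rw [hexp]
            calc (∑ j ∈ Finset.range m, Q ^ (2 * j) + Q ^ (2 * m)) * (Q * Q) + 1
                = ((∑ j ∈ Finset.range m, Q ^ (2 * j)) * (Q * Q) + 1)
                  + Q ^ (2 * m) * (Q * Q) := by ring
              _ = _ := by rw [ih]; ring
      have geomR : S * (Q * Q) + 1 = S + R := by rw [hSdef, geom M, ← hSdef, ← hRQ]
      have hS1 : 1 ≤ S := by
        calc 1 = Q ^ (2 * 0) := by simp
          _ ≤ S := Finset.single_le_sum (f := fun j => Q ^ (2 * j))
              (fun i _ => Nat.zero_le _) (Finset.mem_range.2 (by omega))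
      set b := c * S with hbdef
      have g2 : S * (Q * Q) = 2 * (b * Q) := by rw [hbdef, hQc]; ring
      have g3 : S ≤ b * Q := by
        calc S = 1 * S := (one_mul S).symm
          _ ≤ (c * Q) * S := Nat.mul_le_mul_right S (by nlinarith)
          _ = b * Q := by rw [hbdef]; ring
      have hbQ : b * Q + 1 ≤ R := by linarith [geomR, g2, g3]
      set a := R - b * Q with hadef
      have ha : a + b * Q = R := by rw [hadef]; omega
      have ha1 : 1 ≤ a := by omega
      have hb1 : 1 ≤ b := by nlinarith
      have e4 : a * Q + b * (Q * Q) = R * Q := by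
        calc a * Q + b * (Q * Q) = (a + b * Q) * Q := by ring
          _ = R * Q := by rw [ha]
      have e5 : b * (Q * Q) + c = b + c * R := by
        calc b * (Q * Q) + c = c * (S * (Q * Q) + 1) := by rw [hbdef]; ring
          _ = c * (S + R) := by rw [geomR]
          _ = b + c * R := by rw [hbdef]; ring
      have e6 : R * Q = 2 * (c * R) := by rw [hQc]; ring
      have key : b + a * Q = c * R + c := by linarith [e4, e5, e6]
      -- Frobenius
      have hFrob : ((X:k[X])^a + X^b)^Q = X^(a*Q) + X^(b*Q) := by
        rw [hQw, add_pow_char_pow, ← pow_mul, ← pow_mul, ← hQw]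
      -- pair element
      have pairP : (X^(a + b*Q) + X^(b + a*Q) : k[X]) ∈ TSp k {X^(Q+1)} := by
        have hgenA0 : (X^(Q+1) : k[X]) ∈ A0 k := Xpow_mem_A0 k _ (Nat.succ_ne_zero _)
        have hgA0 : ((X:k[X])^a + X^b) ∈ A0 k :=
          Submodule.add_mem _ (Xpow_mem_A0 k a (by omega)) (Xpow_mem_A0 k b (by omega))
        have t1 := comp_mem_TSp k hgenA0 hgA0
        have t2 := comp_mem_TSp k hgenA0 (Xpow_mem_A0 k a (by omega))
        have t3 := comp_mem_TSp k hgenA0 (Xpow_mem_A0 k b (by omega))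
        have htot := Submodule.sub_mem _ (Submodule.sub_mem _ t1 t2) t3
        have heq : ((X:k[X])^(Q+1)).comp (X^a + X^b) - (X^(Q+1)).comp (X^a)
            - (X^(Q+1)).comp (X^b) = X^(a + b*Q) + X^(b + a*Q) := by
          rw [pow_comp, pow_comp, pow_comp, X_comp, X_comp, X_comp]
          rw [pow_succ, hFrob, ← pow_mul, ← pow_mul]
          ring
        rwa [heq] at htot
      -- assemble
      have m2 : (X^R + X^(c*(R+1)) : k[X]) ∈ V := by
        apply Submodule.mem_sup_left
        apply Submodule.mem_sup_right
        have hZc : c*(R+1) = b + a*Q := by rw [key]; ring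
        have : (X^R + X^(c*(R+1)) : k[X]) = X^(a + b*Q) + X^(b + a*Q) := by
          rw [hZc, ha]
        rw [this]
        exact pairP
      have m3 : (X^(c*(R+1)) : k[X]) ∈ V := by
        apply Submodule.mem_sup_right
        apply Submodule.mem_sup_right
        have h := comp_mem_TSp k (Xpow_mem_A0 k (R+1) (Nat.succ_ne_zero _))
          (Xpow_mem_A0 k c (by omega))
        have heq : ((X:k[X])^(R+1)).comp (X^c) = X^(c*(R+1)) := by
          rw [pow_comp, X_comp, ← pow_mul]
        rwa [heq] at h
      have htotal := Submodule.add_mem _ m1 (Submodule.add_mem _ m2 m3)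
      have hfin : (X + X^R) + ((X^R + X^(c*(R+1))) + X^(c*(R+1))) = (X : k[X]) := by
        have h1 : (X + X^R) + ((X^R + X^(c*(R+1))) + X^(c*(R+1)))
            = X + ((X^R + X^R) + (X^(c*(R+1)) + X^(c*(R+1))) : k[X]) := by ring
        rw [h1, CharTwo.add_self_eq_zero, CharTwo.add_self_eq_zero, add_zero, add_zero]
      rwa [hfin] at htotal
    · -- odd characteristic
      have two_ne : (2 : k) ≠ 0 := by
        intro h
        haveI := ringChar.charP k
        have hdvd : ringChar k ∣ 2 := by
          have : ((2:ℕ) : k) = 0 := by exact_mod_cast h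
          exact (CharP.cast_eq_zero_iff k (ringChar k) 2).1 this
        have h1 : ringChar k ≠ 1 := CharP.ringChar_ne_one
        have h3 : ringChar k ≤ 2 := Nat.le_of_dvd (by norm_num) hdvd
        have h0 : ringChar k ≠ 0 := CharP.char_ne_zero_of_finite k (ringChar k)
        omega
      have mB : (X - X^R : k[X]) ∈ V := by
        apply Submodule.mem_sup_left
        apply Submodule.mem_sup_left
        rw [hRQ]
        exact EB k Q hQ0 M
      have htotal := Submodule.add_mem _ mB m1
      have hsum : (X - X^R) + (X + X^R) = (2:k) • (X : k[X]) := by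
        rw [two_smul]; ring
      rw [hsum] at htotal
      have := Submodule.smul_mem V (2:k)⁻¹ htotal
      rwa [smul_smul, inv_mul_cancel₀ two_ne, one_smul] at this
  -- conclude
  apply le_antisymm
  · exact sup_le (isTSpace_Wn k _).1 (isTSpace_Wn k _).1
  · intro f hf
    have := hVT.2 X hX f hf
    rwa [X_comp] at this
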